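/- For every finite tree T with at least one edge and every integer k with 1 ≤ k ≤ κ(T), a caterpillar with exactly k edges can be obtained from T by contracting edges (i.e., there is a partition of the vertex set of T into nonempty connected parts whose quotient graph is a caterpillar with k edges). -/

import Mathlib

open SimpleGraph

/-- The number of edges of a simple graph. -/
noncomputable def edgeCount {V : Type*} (G : SimpleGraph V) : ℕ := G.edgeSet.ncard

/-- The degree of a vertex. -/
noncomputable def deg {V : Type*} (G : SimpleGraph V) (v : V) : ℕ := (G.neighborSet v).ncard

/-- The number of leaves (vertices of degree 1). -/
noncomputable def leafCount {V : Type*} (G : SimpleGraph V) : ℕ := {v | deg G v = 1}.ncard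

/-- The diameter: the maximum distance between two vertices. -/
noncomputable def treeDiam {V : Type*} (G : SimpleGraph V) : ℕ :=
  sSup {n | ∃ u v : V, G.dist u v = n}

/-- κ(T) = (number of leaves) + (diameter) - 2. -/
noncomputable def kappa {V : Type*} (G : SimpleGraph V) : ℕ :=
  leafCount G + treeDiam G - 2

/-- A graph is a path graph if it is acyclic, preconnected, and has maximum degree ≤ 2
(the empty graph counts as a path). -/
def IsPathGraph {W : Type*} (H : SimpleGraph W) : Prop :=
  H.IsAcyclic ∧ H.Preconnected ∧
    ∀ v a b c : W, H.Adj v a → H.Adj v b → H.Adj v c → a = b ∨ a = c ∨ b = c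

/-- A caterpillar is a tree whose non-leaf vertices induce a path. -/
def IsCaterpillar {V : Type*} (G : SimpleGraph V) : Prop :=
  G.IsTree ∧ IsPathGraph (G.induce {v | 2 ≤ deg G v})

/-- The quotient graph of `G` along a map `c` on vertices: two images are adjacent iff
they are distinct and some edge of `G` joins their fibers. -/
def quotientGraph {V W : Type*} (G : SimpleGraph V) (c : V → W) : SimpleGraph W where
  Adj a b := a ≠ b ∧ ∃ u v : V, c u = a ∧ c v = b ∧ G.Adj u v
  symm := by
    constructor
    rintro a b ⟨hne, u, v, hu, hv, h⟩
    exact ⟨hne.symm, v, u, hv, hu, h.symm⟩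
  loopless := by
    constructor
    rintro a ⟨hne, -⟩
    exact hne rfl

/-- A spider is a tree with at most one vertex of degree greater than 2. -/
def IsSpider {V : Type*} (G : SimpleGraph V) : Prop :=
  G.IsTree ∧ ∀ u v : V, 3 ≤ deg G u → 3 ≤ deg G v → u = v

/-- `k` is the maximum number of edges of a vertex-induced subgraph of `G`
that is a caterpillar. -/
def MaxInducedCaterpillar {V : Type*} (G : SimpleGraph V) (k : ℕ) : Prop :=
  IsGreatest {j : ℕ | ∃ s : Set V, IsCaterpillar (G.induce s) ∧ edgeCount (G.induce s) = j} k

namespace Aux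

variable {V : Type*} {W : Type*}

/-- A walk with support in `s` gives reachability in the induced graph. -/
lemma induce_reachable_of_walk {G : SimpleGraph V} {s : Set V} {u v : V}
    (w : G.Walk u v) (hs : ∀ x ∈ w.support, x ∈ s) :
    (G.induce s).Reachable ⟨u, hs u w.start_mem_support⟩ ⟨v, hs v w.end_mem_support⟩ := by
  induction w with
  | nil => exact Reachable.refl _
  | @cons a b c h q ih =>
    have hb : b ∈ s := hs b (by simp)
    have h1 : (G.induce s).Adj ⟨a, hs a (by simp)⟩ ⟨b, hb⟩ := by
      simp [SimpleGraph.comap_adj, h]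
    exact (h1.reachable).trans (ih (fun x hx => hs x (by simp [hx])))

/-- From reachability in induce, get a `G`-walk with support inside `s`. -/
lemma walk_of_induce_reachable {G : SimpleGraph V} {s : Set V} {u v : s}
    (h : (G.induce s).Reachable u v) :
    ∃ w : G.Walk u.1 v.1, ∀ x ∈ w.support, x ∈ s := by
  obtain ⟨q⟩ := h
  refine ⟨q.map (SimpleGraph.Embedding.induce s).toHom, ?_⟩
  intro x hx
  change x ∈ (q.map (SimpleGraph.Embedding.induce s).toHom).support at hx
  rw [SimpleGraph.Walk.support_map, List.mem_map] at hx
  obtain ⟨y, _, rfl⟩ := hx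
  exact y.2

/-- Reachability inside one fiber of `c`, within `G` minus a fiber-crossing edge. -/
lemma fiber_reach {G : SimpleGraph V} {c : V → W}
    (hfib : ∀ w : W, (G.induce (c ⁻¹' {w})).Connected)
    {u' p' : V} (h : c u' = c p') {u v : V} (hcuv : c u ≠ c v) :
    (G.deleteEdges {s(u,v)}).Reachable u' p' := by
  have hu' : u' ∈ c ⁻¹' {c p'} := h
  have hp' : p' ∈ c ⁻¹' {c p'} := rfl
  have hr : (G.induce (c ⁻¹' {c p'})).Reachable ⟨u', hu'⟩ ⟨p', hp'⟩ :=
    (hfib (c p')).preconnected _ _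
  obtain ⟨w, hw⟩ := walk_of_induce_reachable hr
  have hedges : ∀ e ∈ w.edges, e ∉ ({s(u,v)} : Set (Sym2 V)) := by
    intro e he
    induction e with
    | h x y =>
      simp only [Set.mem_singleton_iff]
      intro hxy
      have hx : x ∈ c ⁻¹' {c p'} := hw x (w.fst_mem_support_of_mem_edges he)
      have hy : y ∈ c ⁻¹' {c p'} := hw y (w.snd_mem_support_of_mem_edges he)
      have hcxy : c x = c y := by
        simp only [Set.mem_preimage, Set.mem_singleton_iff] at hx hy
        rw [hx, hy]
      rw [Sym2.eq_iff] at hxy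
      rcases hxy with ⟨rfl, rfl⟩ | ⟨rfl, rfl⟩
      · exact hcuv hcxy
      · exact hcuv hcxy.symm
  exact ⟨w.toDeleteEdges _ hedges⟩

/-- The quotient of a (pre)connected graph is connected if `c` is surjective. -/
lemma quotient_reach {G : SimpleGraph V} (c : V → W) {x y : V} (w : G.Walk x y) :
    (quotientGraph G c).Reachable (c x) (c y) := by
  induction w with
  | nil => exact Reachable.refl _
  | @cons a b z h q ih =>
    by_cases hab : c a = c b
    · rwa [hab]
    · exact (Reachable.trans ⟨SimpleGraph.Walk.cons ⟨hab, a, b, rfl, rfl, h⟩ .nil⟩ ih)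

lemma quotient_connected {G : SimpleGraph V} (hG : G.Connected) {c : V → W}
    (hc : Function.Surjective c) : (quotientGraph G c).Connected := by
  have : Nonempty V := hG.nonempty
  rw [SimpleGraph.connected_iff]
  refine ⟨?_, ?_⟩
  · intro a b
    obtain ⟨x, rfl⟩ := hc a
    obtain ⟨y, rfl⟩ := hc b
    obtain ⟨w⟩ := hG.preconnected x y
    exact quotient_reach c w
  · obtain ⟨x⟩ := ‹Nonempty V›
    exact ⟨c x⟩

/-- Lift a quotient walk avoiding the image of edge `s(u,v)` to a reachability
statement in `G` minus that edge. -/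
lemma lift_walk {G : SimpleGraph V} {c : V → W}
    (hfib : ∀ w : W, (G.induce (c ⁻¹' {w})).Connected)
    {u v : V} (hcuv : c u ≠ c v) :
    ∀ {a b : W} (q : (quotientGraph G c).Walk a b), s(c u, c v) ∉ q.edges →
    ∀ u' v' : V, c u' = a → c v' = b → (G.deleteEdges {s(u,v)}).Reachable u' v' := by
  intro a b q
  induction q with
  | nil =>
    intro _ u' v' hu' hv'
    exact fiber_reach hfib (by rw [hu', hv']) hcuv
  | @cons a a₂ b hadj rest ih =>
    intro hne u' v' hu' hv'
    obtain ⟨hne2, p, q', hp, hq', hpq⟩ := hadj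
    change s(c u, c v) ∉ s(a, a₂) :: rest.edges at hne
    simp only [SimpleGraph.Walk.edges_cons, List.mem_cons] at hne
    push_neg at hne
    obtain ⟨hne1, hnerest⟩ := hne
    have hstep : (G.deleteEdges {s(u,v)}).Adj p q' := by
      rw [SimpleGraph.deleteEdges_adj]
      refine ⟨hpq, ?_⟩
      intro hmem
      rw [Set.mem_singleton_iff] at hmem
      rw [Sym2.eq_iff] at hmem
      rename_i hcontra0
      have hcontra := hmem
      apply hne1
      rcases hcontra with ⟨rfl, rfl⟩ | ⟨rfl, rfl⟩
      · rw [hp, hq']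
      · rw [hp, hq', Sym2.eq_swap]
    have h1 : (G.deleteEdges {s(u,v)}).Reachable u' p :=
      fiber_reach hfib (by rw [hu', hp]) hcuv
    have h2 := ih hnerest q' v' hq' hv'
    exact h1.trans (hstep.reachable.trans h2)

/-- The quotient of an acyclic graph along connected fibers is acyclic. -/
lemma quotient_acyclic {G : SimpleGraph V} (hG : G.IsAcyclic) {c : V → W}
    (hfib : ∀ w : W, (G.induce (c ⁻¹' {w})).Connected) :
    (quotientGraph G c).IsAcyclic := by
  intro x w hw
  cases w with
  | nil => exact hw.ne_nil rfl
  | @cons _ a₂ _ hadj rest =>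
    obtain ⟨hne2, u, v, hu, hv, huv⟩ := hadj
    have hbridge : G.IsBridge s(u, v) := isAcyclic_iff_forall_adj_isBridge.mp hG huv
    rw [SimpleGraph.isBridge_iff] at hbridge
    have hnodup := hw.edges_nodup
    change (s(x, a₂) :: rest.edges).Nodup at hnodup
    simp only [SimpleGraph.Walk.edges_cons, List.nodup_cons] at hnodup
    have hcuv : c u ≠ c v := by rw [hu, hv]; exact hne2
    have : (G.deleteEdges {s(u,v)}).Reachable v u := by
      refine lift_walk hfib hcuv rest ?_ v u hv hu
      rw [hu, hv]
      exact hnodup.1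
    exact hbridge this.symm

lemma singleton_induce_connected {G : SimpleGraph V} (x : V) {s : Set V}
    (hs : s = {x}) : (G.induce s).Connected := by
  subst hs
  rw [SimpleGraph.connected_iff]
  refine ⟨?_, ⟨⟨x, rfl⟩⟩⟩
  rintro ⟨a, ha⟩ ⟨b, hb⟩
  simp only [Set.mem_singleton_iff] at ha hb
  subst ha; subst hb
  exact Reachable.refl _

/-- getVert is injective on a path. -/
lemma IsPath.getVert_inj {G : SimpleGraph V} {u v : V} {p : G.Walk u v} (hp : p.IsPath) :
    ∀ i j, i ≤ p.length → j ≤ p.length → p.getVert i = p.getVert j → i = j := by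
  induction p with
  | nil => intro i j hi hj _; simp only [SimpleGraph.Walk.length_nil, Nat.le_zero] at hi hj; omega
  | @cons a b z h q ih =>
    intro i j hi hj hij
    simp only [SimpleGraph.Walk.length_cons] at hi hj
    match i, j with
    | 0, 0 => rfl
    | 0, (m+1) =>
      exfalso
      rw [SimpleGraph.Walk.getVert_zero, SimpleGraph.Walk.getVert_cons_succ] at hij
      exact ((SimpleGraph.Walk.cons_isPath_iff h q).mp hp).2
        (SimpleGraph.Walk.mem_support_iff_exists_getVert.mpr ⟨m, hij.symm, by omega⟩)
    | (m+1), 0 =>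
      exfalso
      rw [SimpleGraph.Walk.getVert_zero, SimpleGraph.Walk.getVert_cons_succ] at hij
      exact ((SimpleGraph.Walk.cons_isPath_iff h q).mp hp).2
        (SimpleGraph.Walk.mem_support_iff_exists_getVert.mpr ⟨m, hij, by omega⟩)
    | (m+1), (n+1) =>
      rw [SimpleGraph.Walk.getVert_cons_succ, SimpleGraph.Walk.getVert_cons_succ] at hij
      have := ih ((SimpleGraph.Walk.cons_isPath_iff h q).mp hp).1 m n (by omega) (by omega) hij
      omega

/-- Every edge of a walk is of the form s(getVert r, getVert (r+1)). -/
lemma edge_getVert {G : SimpleGraph V} {u v : V} (p : G.Walk u v) :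
    ∀ e ∈ p.edges, ∃ r, r < p.length ∧ e = s(p.getVert r, p.getVert (r+1)) := by
  induction p with
  | nil => intro e he; simp at he
  | @cons a b z h q ih =>
    intro e he
    simp only [SimpleGraph.Walk.edges_cons, List.mem_cons] at he
    rcases he with rfl | he
    · exact ⟨0, by simp [SimpleGraph.Walk.getVert_zero, SimpleGraph.Walk.getVert_cons_succ]⟩
    · obtain ⟨r, hr, hre⟩ := ih e he
      exact ⟨r + 1, by simpa using hr, by
        simpa [SimpleGraph.Walk.getVert_cons_succ] using hre⟩

/-- Converse of edge_getVert. -/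
lemma getVert_edge_mem {G : SimpleGraph V} {u v : V} (p : G.Walk u v) :
    ∀ r, r < p.length → s(p.getVert r, p.getVert (r+1)) ∈ p.edges := by
  induction p with
  | nil => intro r hr; simp at hr
  | @cons a b z h q ih =>
    intro r hr
    match r with
    | 0 =>
      simp [SimpleGraph.Walk.getVert_zero, SimpleGraph.Walk.getVert_cons_succ]
    | (n+1) =>
      simp only [SimpleGraph.Walk.length_cons] at hr
      simp only [SimpleGraph.Walk.getVert_cons_succ, SimpleGraph.Walk.edges_cons,
        List.mem_cons]
      exact Or.inr (ih n (by omega))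

/-- A path in a subgraph `H ≤ G` between vertices outside a set of `G`-leaves
avoids that set entirely. -/
lemma path_avoid_leaves {G H : SimpleGraph V} (hle : H ≤ G) {x z : V}
    (q : H.Walk x z) (hq : q.IsPath) (S' : Set V)
    (hS : ∀ y ∈ S', (G.neighborSet y).ncard = 1) (hx : x ∉ S') (hz : z ∉ S') :
    ∀ y ∈ q.support, y ∉ S' := by
  induction q with
  | nil => intro y hy; simp at hy; subst hy; exact hx
  | @cons a b zz h rest ih =>
    intro y hy
    simp only [SimpleGraph.Walk.support_cons, List.mem_cons] at hy
    rcases hy with rfl | hy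
    · exact hx
    · have hrest : rest.IsPath := ((SimpleGraph.Walk.cons_isPath_iff h rest).mp hq).1
      have hb : b ∉ S' := by
        intro hbS
        obtain ⟨w1, hw1⟩ := Set.ncard_eq_one.mp (hS b hbS)
        -- b has a unique G-neighbor
        by_cases hbz : b = zz
        · subst hbz; exact hz hbS
        · -- rest is a nonempty path from b
          cases rest with
          | nil => exact hbz rfl
          | @cons _ b2 _ h2 rest2 =>
            have h1 : a ∈ G.neighborSet b := hle h.symm
            have h2' : b2 ∈ G.neighborSet b := hle h2
            rw [hw1, Set.mem_singleton_iff] at h1 h2'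
            have hab2 : a = b2 := h1.trans h2'.symm
            have : a ∉ (SimpleGraph.Walk.cons h2 rest2).support :=
              ((SimpleGraph.Walk.cons_isPath_iff h _).mp hq).2
            exact this (by rw [hab2]; simp)
      exact ih hrest hb hz y hy

/-- Induced subgraphs of acyclic graphs are acyclic. -/
lemma isAcyclic_induce {G : SimpleGraph V} (h : G.IsAcyclic) (s : Set V) :
    (G.induce s).IsAcyclic := by
  intro x w hw
  exact h (w.map (SimpleGraph.Embedding.induce (G := G) s).toHom)
    (hw.map (f := (SimpleGraph.Embedding.induce (G := G) s).toHom)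
      (SimpleGraph.Embedding.induce (G := G) s).injective)



lemma reach_or_hit {V : Type*} {G : SimpleGraph V} (E : Set (Sym2 V)) {v z : V}
    (w : G.Walk v z) :
    (G.deleteEdges E).Reachable v z ∨
      ∃ x y : V, s(x, y) ∈ E ∧ (G.deleteEdges E).Reachable v x := by
  induction w with
  | nil => exact Or.inl (Reachable.refl _)
  | @cons x y zz h q ih =>
    by_cases he : s(x, y) ∈ E
    · exact Or.inr ⟨x, y, he, Reachable.refl _⟩
    · have hAdj : (G.deleteEdges E).Adj x y := SimpleGraph.deleteEdges_adj.mpr ⟨h, he⟩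
      rcases ih with hl | ⟨x', y', hx', hr⟩
      · exact Or.inl (hAdj.reachable.trans hl)
      · exact Or.inr ⟨x', y', hx', hAdj.reachable.trans hr⟩

lemma construction {V : Type*} [Fintype V] (G : SimpleGraph V) (hG : G.IsTree)
    (a b : V) (p : G.Walk a b) (hpath : p.IsPath) (d : ℕ) (hlen : p.length = d)
    (k t m : ℕ) (ht1 : 1 ≤ t) (htd : t ≤ d) (hktm : k = t + m)
    (S : Finset V) (hScard : S.card = m) (hSleaf : ∀ x ∈ S, deg G x = 1)
    (hSoff : ∀ x ∈ S, x ∉ p.support) :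
    ∃ (W : Type) (_ : Fintype W) (c : V → W),
      Function.Surjective c ∧
      (∀ w : W, (G.induce (c ⁻¹' {w})).Connected) ∧
      IsCaterpillar (quotientGraph G c) ∧
      edgeCount (quotientGraph G c) = k := by
  classical
  have hGc : G.Connected := hG.isConnected
  have hGa : G.IsAcyclic := hG.IsAcyclic
  set H : SimpleGraph V := G.deleteEdges {e | e ∈ p.edges} with hHdef
  have hHle : H ≤ G := G.deleteEdges_le _
  set pv : ℕ → V := p.getVert with hpv
  have hpv0 : pv 0 = a := p.getVert_zero
  have hpvadj : ∀ i, i < d → G.Adj (pv i) (pv (i+1)) := by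
    intro i hi; exact p.adj_getVert_succ (by omega)
  have hinj : ∀ i j, i ≤ d → j ≤ d → pv i = pv j → i = j := by
    intro i j hi hj
    exact IsPath.getVert_inj hpath i j (by omega) (by omega)
  have hpvsupp : ∀ i, i ≤ d → pv i ∈ p.support := by
    intro i hi
    exact SimpleGraph.Walk.mem_support_iff_exists_getVert.mpr ⟨i, rfl, by omega⟩
  -- existence of a projection index
  have exists_proj : ∀ v : V, ∃ i, i ≤ d ∧ H.Reachable v (pv i) := by
    intro v
    obtain ⟨w⟩ := hGc.preconnected v a
    rcases reach_or_hit {e | e ∈ p.edges} w with hl | ⟨x, y, hx, hr⟩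
    · exact ⟨0, by omega, by rw [hpv0]; exact hl⟩
    · have hxs : x ∈ p.support := SimpleGraph.Walk.fst_mem_support_of_mem_edges p hx
      obtain ⟨n, hn, hnd⟩ := SimpleGraph.Walk.mem_support_iff_exists_getVert.mp hxs
      exact ⟨n, by omega, by rw [← hn] at hr; exact hr⟩
  -- uniqueness
  have uniq0 : ∀ i j, i < j → j ≤ d → ¬ H.Reachable (pv i) (pv j) := by
    intro i j hij hj hr
    have hadj : G.Adj (pv i) (pv (i+1)) := hpvadj i (by omega)
    have hbr : G.IsBridge s(pv i, pv (i+1)) :=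
      isAcyclic_iff_forall_adj_isBridge.mp hGa hadj
    rw [SimpleGraph.isBridge_iff] at hbr
    set G' : SimpleGraph V := G.deleteEdges {s(pv i, pv (i+1))} with hG'
    have hHG' : H ≤ G' := by
      intro x y hxy
      rw [hHdef, SimpleGraph.deleteEdges_adj] at hxy
      rw [hG', SimpleGraph.deleteEdges_adj]
      refine ⟨hxy.1, ?_⟩
      intro hmem
      rw [Set.mem_singleton_iff] at hmem
      apply hxy.2
      rw [Set.mem_setOf_eq, hmem]
      exact getVert_edge_mem p i (by omega)
    have hchain : ∀ n, i + 1 + n ≤ d → G'.Reachable (pv (i+1)) (pv (i+1+n)) := by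
      intro n
      induction n with
      | zero => intro _; exact Reachable.refl _
      | succ nn ihn =>
        intro hle
        have hstep : G'.Adj (pv (i+1+nn)) (pv (i+1+(nn+1))) := by
          rw [hG', SimpleGraph.deleteEdges_adj]
          refine ⟨by rw [show i+1+(nn+1) = (i+1+nn)+1 by omega]; exact hpvadj _ (by omega), ?_⟩
          intro hmem
          rw [Set.mem_singleton_iff, Sym2.eq_iff] at hmem
          rcases hmem with ⟨h1, h2⟩ | ⟨h1, h2⟩
          · have := hinj _ _ (by omega) (by omega) h1; omega
          · have := hinj _ _ (by omega) (by omega) h2; omega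
        exact (ihn (by omega)).trans hstep.reachable
    have hreach : G'.Reachable (pv i) (pv (i+1)) := by
      have h1 : G'.Reachable (pv i) (pv j) := hr.mono hHG'
      have h2 : G'.Reachable (pv (i+1)) (pv j) := by
        have := hchain (j - (i+1)) (by omega)
        rwa [show i + 1 + (j - (i+1)) = j by omega] at this
      exact h1.trans h2.symm
    exact hbr hreach
  have uniq : ∀ i j, i ≤ d → j ≤ d → H.Reachable (pv i) (pv j) → i = j := by
    intro i j hi hj hr
    rcases lt_trichotomy i j with h | h | h
    · exact absurd hr (uniq0 i j h hj)
    · exact h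
    · exact absurd hr.symm (uniq0 j i h hi)
  choose projIdx hprojle hprojreach using exists_proj
  have hproj_eq : ∀ v i, i ≤ d → H.Reachable v (pv i) → projIdx v = i := by
    intro v i hi hr
    exact uniq _ _ (hprojle v) hi ((hprojreach v).symm.trans hr)
  have hproj_pv : ∀ i, i ≤ d → projIdx (pv i) = i := by
    intro i hi
    exact hproj_eq _ _ hi (Reachable.refl _)
  have hproj_reach : ∀ u v, H.Reachable u v → projIdx u = projIdx v := by
    intro u v hr
    exact hproj_eq u _ (hprojle v) (hr.trans (hprojreach v))
  -- leaf facts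
  have hS1 : ∀ x ∈ S, ∃ w, G.neighborSet x = {w} := by
    intro x hx
    exact Set.ncard_eq_one.mp (hSleaf x hx)
  have hSS : ∀ x ∈ S, ∀ y ∈ S, ¬ G.Adj x y := by
    intro x hx y hy hadj
    obtain ⟨wx, hwx⟩ := hS1 x hx
    obtain ⟨wy, hwy⟩ := hS1 y hy
    have hwxy : wx = y := by
      have : y ∈ G.neighborSet x := hadj
      rw [hwx, Set.mem_singleton_iff] at this; exact this.symm
    have hwyx : wy = x := by
      have : x ∈ G.neighborSet y := hadj.symm
      rw [hwy, Set.mem_singleton_iff] at this; exact this.symm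
    have trap : ∀ {zz z' : V} (_ : G.Walk zz z'), (zz = x ∨ zz = y) → (z' = x ∨ z' = y) := by
      intro zz z' w
      induction w with
      | nil => exact id
      | @cons c1 c2 c3 h q ih =>
        intro hc1
        apply ih
        rcases hc1 with rfl | rfl
        · have : c2 ∈ G.neighborSet c1 := h
          rw [hwx, Set.mem_singleton_iff] at this
          right; rw [this, hwxy]
        · have : c2 ∈ G.neighborSet c1 := h
          rw [hwy, Set.mem_singleton_iff] at this
          left; rw [this, hwyx]
    obtain ⟨w⟩ := hGc.preconnected x a
    have ha : a = x ∨ a = y := trap w (Or.inl rfl)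
    have haS : a ∈ p.support := p.start_mem_support
    rcases ha with rfl | rfl
    · exact hSoff a hx haS
    · exact hSoff a hy haS
  have hSnotpv : ∀ x ∈ S, ∀ i, i ≤ d → x ≠ pv i := by
    intro x hx i hi hcon
    exact hSoff x hx (hcon ▸ hpvsupp i hi)
  have hpvnotS : ∀ i, i ≤ d → pv i ∉ S := by
    intro i hi hcon
    exact hSnotpv _ hcon i hi rfl
  -- the quotient map
  have eS : ↥S ≃ Fin m := S.equivFinOfCardEq hScard
  set Wt := (Fin (t+1) ⊕ Fin m : Type) with hWt
  set c : V → Wt := fun v =>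
    if h : v ∈ S then Sum.inr (eS ⟨v, h⟩)
    else Sum.inl ⟨min (projIdx v) t, by omega⟩ with hc
  set ℓ : Fin m → V := fun s => ((eS.symm s : ↥S) : V) with hℓ
  have hℓS : ∀ s, ℓ s ∈ S := fun s => (eS.symm s).2
  have hcℓ : ∀ s, c (ℓ s) = Sum.inr s := by
    intro s
    rw [hc]
    simp only [hℓS s, dif_pos]
    congr 1
    have hsub : (⟨ℓ s, hℓS s⟩ : ↥S) = eS.symm s := Subtype.ext rfl
    rw [hsub, Equiv.apply_symm_apply]
  have hcNS : ∀ x, x ∉ S → c x = Sum.inl ⟨min (projIdx x) t, by omega⟩ := by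
    intro x hx
    rw [hc]; simp [hx]
  have hc_pv : ∀ i, i ≤ d → c (pv i) = Sum.inl ⟨min i t, by omega⟩ := by
    intro i hi
    rw [hcNS _ (hpvnotS i hi)]; simp only [hproj_pv i hi]
  have hcinr : ∀ x s, c x = Sum.inr s → x = ℓ s := by
    intro x s hx
    by_cases hxS : x ∈ S
    · rw [hc] at hx
      simp only [hxS, dif_pos] at hx
      have h2 : eS ⟨x, hxS⟩ = s := Sum.inr_injective hx
      rw [hℓ]
      show x = ((eS.symm s : ↥S) : V)
      rw [← h2, Equiv.symm_apply_apply]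
    · rw [hcNS x hxS] at hx
      exact absurd hx (by simp)
  have hcinl : ∀ x (i : Fin (t+1)), c x = Sum.inl i → x ∉ S ∧ min (projIdx x) t = i.1 := by
    intro x i hx
    by_cases hxS : x ∈ S
    · rw [hc] at hx
      simp only [hxS, dif_pos] at hx
      exact absurd hx (by simp)
    · rw [hcNS x hxS] at hx
      refine ⟨hxS, ?_⟩
      have := Sum.inl_injective hx
      exact congrArg Fin.val this
  have finext : ∀ {n : ℕ} (x y : Fin n), x.1 = y.1 → x = y := fun x y h => Fin.ext h
  -- edge classification
  have hclass : ∀ {x y : V}, G.Adj x y →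
      (∃ r, r < d ∧ ((x = pv r ∧ y = pv (r+1)) ∨ (y = pv r ∧ x = pv (r+1)))) ∨ H.Adj x y := by
    intro x y hxy
    by_cases he : s(x,y) ∈ p.edges
    · obtain ⟨r, hr, hre⟩ := edge_getVert p s(x,y) he
      rw [Sym2.eq_iff] at hre
      exact Or.inl ⟨r, by omega, by tauto⟩
    · exact Or.inr (SimpleGraph.deleteEdges_adj.mpr ⟨hxy, he⟩)
  set Q := quotientGraph G c with hQ
  have hQadj : ∀ w1 w2 : Wt, Q.Adj w1 w2 ↔
      (w1 ≠ w2 ∧ ∃ u v : V, c u = w1 ∧ c v = w2 ∧ G.Adj u v) := fun _ _ => Iff.rfl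
  have hQ2 : ∀ (i : Fin (t+1)) (s : Fin m),
      Q.Adj (Sum.inl i) (Sum.inr s) ↔ min (projIdx (ℓ s)) t = i.1 := by
    intro i s
    constructor
    · rintro ⟨hne, u, v, hu, hv, huv⟩
      have hv' := hcinr v s hv
      subst hv'
      obtain ⟨huS, hmin⟩ := hcinl u i hu
      rcases hclass huv with ⟨r, hr, hcase⟩ | hHadj
      · exfalso
        rcases hcase with ⟨h1, h2⟩ | ⟨h1, h2⟩
        · exact hSnotpv _ (hℓS s) (r+1) (by omega) h2
        · exact hSnotpv _ (hℓS s) r (by omega) h1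
      · have := hproj_reach u (ℓ s) hHadj.reachable
        rw [← this]
        exact hmin
    · intro hmin
      obtain ⟨w1, hw1⟩ := hS1 (ℓ s) (hℓS s)
      have hadj : G.Adj (ℓ s) w1 := by
        have : w1 ∈ G.neighborSet (ℓ s) := by rw [hw1]; exact rfl
        exact this
      have hw1S : w1 ∉ S := fun h => hSS _ (hℓS s) _ h hadj
      have hHadj : H.Adj (ℓ s) w1 := by
        refine SimpleGraph.deleteEdges_adj.mpr ⟨hadj, fun he => ?_⟩
        exact hSoff _ (hℓS s) (SimpleGraph.Walk.fst_mem_support_of_mem_edges p he)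
      have hproj : projIdx w1 = projIdx (ℓ s) := (hproj_reach _ _ hHadj.reachable).symm
      refine ⟨by simp, w1, ℓ s, ?_, hcℓ s, hadj.symm⟩
      rw [hcNS w1 hw1S]
      congr 1
      exact finext _ _ (by simp only []; rw [hproj]; exact hmin)
  have hQ1 : ∀ i j : Fin (t+1), Q.Adj (Sum.inl i) (Sum.inl j) ↔
      (i.1 + 1 = j.1 ∨ j.1 + 1 = i.1) := by
    intro i j
    constructor
    · rintro ⟨hne, u, v, hu, hv, huv⟩
      obtain ⟨huS, hmini⟩ := hcinl u i hu
      obtain ⟨hvS, hminj⟩ := hcinl v j hv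
      have hij : i.1 ≠ j.1 := fun h => hne (by rw [finext i j h])
      rcases hclass huv with ⟨r, hr, hcase⟩ | hHadj
      · rcases hcase with ⟨h1, h2⟩ | ⟨h1, h2⟩
        · rw [h1, hproj_pv r (by omega)] at hmini
          rw [h2, hproj_pv (r+1) (by omega)] at hminj
          omega
        · rw [h2, hproj_pv (r+1) (by omega)] at hmini
          rw [h1, hproj_pv r (by omega)] at hminj
          omega
      · have := hproj_reach u v hHadj.reachable
        rw [this] at hmini
        omega
    · intro hcase
      rcases hcase with hij | hij
      · have hjt : j.1 ≤ t := by omega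
        refine ⟨fun hcon => ?_, pv i.1, pv (i.1+1), ?_, ?_, hpvadj i.1 (by omega)⟩
        · have := Sum.inl_injective hcon
          rw [this] at hij; omega
        · rw [hc_pv i.1 (by omega)]
          congr 1
          exact finext _ _ (by show min _ t = _; omega)
        · rw [hc_pv (i.1+1) (by omega)]
          congr 1
          exact finext _ _ (by show min _ t = _; omega)
      · have hit : i.1 ≤ t := by omega
        refine ⟨fun hcon => ?_, pv (j.1+1), pv j.1, ?_, ?_, (hpvadj j.1 (by omega)).symm⟩
        · have := Sum.inl_injective hcon
          rw [this] at hij; omega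
        · rw [hc_pv (j.1+1) (by omega)]
          congr 1
          exact finext _ _ (by show min _ t = _; omega)
        · rw [hc_pv j.1 (by omega)]
          congr 1
          exact finext _ _ (by show min _ t = _; omega)
  have hQ3 : ∀ s s' : Fin m, ¬ Q.Adj (Sum.inr s) (Sum.inr s') := by
    rintro s s' ⟨hne, u, v, hu, hv, huv⟩
    have hu' := hcinr u s hu
    have hv' := hcinr v s' hv
    subst hu'; subst hv'
    exact hSS _ (hℓS s) _ (hℓS s') huv
  have hsurj : Function.Surjective c := by
    intro w
    match w with
    | Sum.inl i =>
      refine ⟨pv i.1, ?_⟩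
      rw [hc_pv i.1 (by omega)]
      congr 1
      exact finext _ _ (by show min _ t = _; omega)
    | Sum.inr s => exact ⟨ℓ s, hcℓ s⟩
  -- walks within fibers
  have walkH_to_pv : ∀ x, x ∉ S → ∃ w : G.Walk x (pv (projIdx x)),
      ∀ y ∈ w.support, y ∉ S ∧ projIdx y = projIdx x := by
    intro x hxS
    obtain ⟨w0⟩ := hprojreach x
    set q := w0.bypass with hq0
    have hq : q.IsPath := w0.bypass_isPath
    have havoid : ∀ y ∈ q.support, y ∉ (↑S : Set V) := by
      refine path_avoid_leaves hHle q hq (↑S : Set V) ?_ ?_ ?_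
      · intro y hy
        exact hSleaf y hy
      · exact fun h => hxS h
      · exact fun h => (hpvnotS _ (hprojle x)) h
    have hconst : ∀ y ∈ q.support, projIdx y = projIdx x := by
      intro y hy
      have : H.Reachable x y := ⟨q.takeUntil y hy⟩
      exact (hproj_reach x y this).symm
    refine ⟨q.map (SimpleGraph.Hom.ofLE hHle), ?_⟩
    intro y hy
    rw [SimpleGraph.Walk.support_map, List.mem_map] at hy
    obtain ⟨y0, hy0, rfl⟩ := hy
    exact ⟨fun h => havoid y0 hy0 h, hconst y0 hy0⟩
  have chain_walk : ∀ n r j, r + n = j → j ≤ d → ∃ w : G.Walk (pv j) (pv r),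
      ∀ y ∈ w.support, ∃ x', r ≤ x' ∧ x' ≤ j ∧ y = pv x' := by
    intro n
    induction n with
    | zero =>
      intro r j h _
      have hje : j = r := by omega
      subst hje
      refine ⟨SimpleGraph.Walk.nil, ?_⟩
      intro y hy
      simp only [SimpleGraph.Walk.support_nil, List.mem_singleton] at hy
      exact ⟨j, le_rfl, le_rfl, hy⟩
    | succ nn ih =>
      intro r j h hd2
      have hje : j = r + (nn+1) := h.symm
      subst hje
      obtain ⟨w0, hw0⟩ := ih r (r + nn) rfl (by omega)
      have hadj : G.Adj (pv (r+nn+1)) (pv (r+nn)) := (hpvadj (r+nn) (by omega)).symm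
      refine ⟨SimpleGraph.Walk.cons hadj w0, ?_⟩
      intro y hy
      simp only [SimpleGraph.Walk.support_cons, List.mem_cons] at hy
      rcases hy with rfl | hy
      · exact ⟨r+nn+1, by omega, by omega, rfl⟩
      · obtain ⟨x', h1, h2, h3⟩ := hw0 y hy
        exact ⟨x', by omega, by omega, h3⟩
  have hfibers : ∀ w : Wt, (G.induce (c ⁻¹' {w})).Connected := by
    intro w
    match w with
    | Sum.inr s =>
      refine singleton_induce_connected (ℓ s) ?_
      ext x
      simp only [Set.mem_preimage, Set.mem_singleton_iff]
      constructor
      · exact hcinr x s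
      · rintro rfl; exact hcℓ s
    | Sum.inl i =>
      have hmem : ∀ x, x ∈ c ⁻¹' {Sum.inl i} ↔ (x ∉ S ∧ min (projIdx x) t = i.1) := by
        intro x
        simp only [Set.mem_preimage, Set.mem_singleton_iff]
        constructor
        · exact hcinl x i
        · rintro ⟨h1, h2⟩
          rw [hcNS x h1]
          congr 1
          exact finext _ _ h2
      have hpvmem : pv i.1 ∈ c ⁻¹' {Sum.inl i} := by
        rw [hmem]
        refine ⟨hpvnotS i.1 (by omega), ?_⟩
        rw [hproj_pv i.1 (by omega)]
        omega
      have key : ∀ x (hx : x ∈ c ⁻¹' {Sum.inl i}),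
          (G.induce (c ⁻¹' {Sum.inl i})).Reachable ⟨x, hx⟩ ⟨pv i.1, hpvmem⟩ := by
        intro x hx
        obtain ⟨hxS, hxmin⟩ := (hmem x).mp hx
        obtain ⟨w1, hw1⟩ := walkH_to_pv x hxS
        by_cases hi : i.1 < t
        · have hproj' : projIdx x = i.1 := by omega
          have hsupp : ∀ y ∈ w1.support, y ∈ c ⁻¹' {Sum.inl i} := by
            intro y hy
            obtain ⟨h1, h2⟩ := hw1 y hy
            rw [hmem]
            exact ⟨h1, by omega⟩
          have hsupp' : ∀ y ∈ (w1.copy rfl (by rw [hproj'] : pv (projIdx x) = pv i.1)).support,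
              y ∈ c ⁻¹' {Sum.inl i} := by
            intro y hy
            rw [SimpleGraph.Walk.support_copy] at hy
            exact hsupp y hy
          exact induce_reachable_of_walk _ hsupp'
        · have hibound := i.isLt
          have hit : i.1 = t := by omega
          have hprojt : t ≤ projIdx x := by omega
          obtain ⟨w2, hw2⟩ := chain_walk (projIdx x - t) t (projIdx x) (by omega) (hprojle x)
          have hsupp : ∀ y ∈ (w1.append w2).support, y ∈ c ⁻¹' {Sum.inl i} := by
            intro y hy
            rw [SimpleGraph.Walk.mem_support_append_iff] at hy
            rcases hy with hy | hy
            · obtain ⟨h1, h2⟩ := hw1 y hy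
              rw [hmem]
              exact ⟨h1, by omega⟩
            · obtain ⟨x', h1, h2, h3⟩ := hw2 y hy
              have hpd := hprojle x
              rw [hmem, h3]
              refine ⟨hpvnotS x' (by omega), ?_⟩
              rw [hproj_pv x' (by omega)]
              omega
          have hsupp' : ∀ y ∈ ((w1.append w2).copy rfl
              (by rw [hit] : pv t = pv i.1)).support, y ∈ c ⁻¹' {Sum.inl i} := by
            intro y hy
            rw [SimpleGraph.Walk.support_copy] at hy
            exact hsupp y hy
          exact induce_reachable_of_walk _ hsupp'
      rw [SimpleGraph.connected_iff]
      refine ⟨?_, ⟨⟨pv i.1, hpvmem⟩⟩⟩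
      rintro ⟨x, hx⟩ ⟨y, hy⟩
      exact (key x hx).trans (key y hy).symm
  -- the quotient is a tree
  have hQconn : Q.Connected := quotient_connected hGc hsurj
  have hQacy : Q.IsAcyclic := quotient_acyclic hGa hfibers
  have hQtree : Q.IsTree := (SimpleGraph.isTree_iff (G := Q)).mpr ⟨hQconn, hQacy⟩
  -- degrees
  set attach : Fin m → Fin (t+1) := fun s => ⟨min (projIdx (ℓ s)) t, by omega⟩ with hattach
  have hnbr_inr : ∀ s : Fin m, Q.neighborSet (Sum.inr s) = {Sum.inl (attach s)} := by
    intro s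
    ext w
    simp only [SimpleGraph.mem_neighborSet, Set.mem_singleton_iff]
    match w with
    | Sum.inl i =>
      constructor
      · intro h
        have := (hQ2 i s).mp h.symm
        exact congrArg Sum.inl (finext i (attach s) this.symm)
      · intro h
        have : attach s = i := (Sum.inl_injective h).symm
        exact ((hQ2 i s).mpr (congrArg Fin.val this)).symm
    | Sum.inr s' =>
      constructor
      · intro h; exact absurd h (hQ3 s s')
      · intro h; exact absurd h (by simp)
  have hdeg_inr : ∀ s : Fin m, deg Q (Sum.inr s) = 1 := by
    intro s
    show (Q.neighborSet (Sum.inr s)).ncard = 1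
    rw [hnbr_inr s]
    exact Set.ncard_singleton _
  have hdeg_inl2 : ∀ i : Fin (t+1), 0 < i.1 → i.1 < t → 2 ≤ deg Q (Sum.inl i) := by
    intro i h0 ht'
    have hadjA : Q.Adj (Sum.inl i) (Sum.inl ⟨i.1 - 1, by omega⟩) :=
      (hQ1 i ⟨i.1 - 1, by omega⟩).mpr (by right; show (i.1-1) + 1 = i.1; omega)
    have hadj2 : Q.Adj (Sum.inl i) (Sum.inl ⟨i.1 + 1, by omega⟩) :=
      (hQ1 i ⟨i.1 + 1, by omega⟩).mpr (by left; show i.1 + 1 = i.1 + 1; rfl)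
    have hlt : 1 < (Q.neighborSet (Sum.inl i)).ncard := by
      rw [Set.one_lt_ncard (Set.toFinite _)]
      refine ⟨_, hadjA, _, hadj2, ?_⟩
      intro hcon
      have := congrArg Fin.val (Sum.inl_injective hcon)
      simp only [] at this
      omega
    exact hlt
  -- the set of non-leaves
  have hNinr : ∀ s : Fin m, Sum.inr s ∉ {v : Wt | 2 ≤ deg Q v} := by
    intro s hcon
    rw [Set.mem_setOf_eq, hdeg_inr s] at hcon
    omega
  have hpathgraph : IsPathGraph (Q.induce {v : Wt | 2 ≤ deg Q v}) := by
    refine ⟨isAcyclic_induce hQacy _, ?_, ?_⟩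
    · -- preconnected
      have ladder : ∀ n (i j : Fin (t+1)) (hi : Sum.inl i ∈ {v : Wt | 2 ≤ deg Q v})
          (hj : Sum.inl j ∈ {v : Wt | 2 ≤ deg Q v}), i.1 + n = j.1 →
          (Q.induce {v : Wt | 2 ≤ deg Q v}).Reachable ⟨Sum.inl i, hi⟩ ⟨Sum.inl j, hj⟩ := by
        intro n
        induction n with
        | zero =>
          intro i j hi hj hn
          have : i = j := finext i j (by omega)
          subst this
          exact Reachable.refl _
        | succ nn ih =>
          intro i j hi hj hn
          have hjb := j.isLt
          set mid : Fin (t+1) := ⟨i.1 + 1, by omega⟩ with hmid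
          have hmidval : mid.1 = i.1 + 1 := rfl
          have hmidN : Sum.inl mid ∈ {v : Wt | 2 ≤ deg Q v} := by
            by_cases hcase : i.1 + 1 = j.1
            · have : mid = j := finext _ _ (by rw [hmidval]; omega)
              rw [this]; exact hj
            · rw [Set.mem_setOf_eq]
              exact hdeg_inl2 mid (by rw [hmidval]; omega) (by rw [hmidval]; omega)
          have hadj : (Q.induce {v : Wt | 2 ≤ deg Q v}).Adj ⟨Sum.inl i, hi⟩ ⟨Sum.inl mid, hmidN⟩ := by
            show Q.Adj (Sum.inl i) (Sum.inl mid)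
            exact (hQ1 i mid).mpr (Or.inl hmidval.symm)
          exact hadj.reachable.trans (ih mid j hmidN hj (by rw [hmidval]; omega))
      rintro ⟨w1, h1⟩ ⟨w2, h2⟩
      match w1, h1, w2, h2 with
      | Sum.inr s, h1, _, _ => exact absurd h1 (hNinr s)
      | Sum.inl i, h1, Sum.inr s, h2 => exact absurd h2 (hNinr s)
      | Sum.inl i, h1, Sum.inl j, h2 =>
        rcases le_or_gt i.1 j.1 with hle | hlt
        · exact ladder (j.1 - i.1) i j h1 h2 (by omega)
        · exact (ladder (i.1 - j.1) j i h2 h1 (by omega)).symm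
    · -- max degree 2 along the spine
      rintro ⟨v1, hv⟩ aa bb cc hva hvb hvc
      match v1, hv with
      | Sum.inr s, hv => exact absurd hv (hNinr s)
      | Sum.inl i, hv =>
        have getfm : ∀ (z : {v : Wt | 2 ≤ deg Q v})
            (_ : (Q.induce {v : Wt | 2 ≤ deg Q v}).Adj ⟨Sum.inl i, hv⟩ z),
            ∃ jz : Fin (t+1), z.1 = Sum.inl jz ∧ (jz.1 = i.1 + 1 ∨ jz.1 + 1 = i.1) := by
          rintro ⟨z1, hz1⟩ hz
          have hz' : Q.Adj (Sum.inl i) z1 := hz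
          match z1, hz1 with
          | Sum.inr s, hz1 => exact absurd hz1 (hNinr s)
          | Sum.inl jz, hz1 =>
            have := (hQ1 i jz).mp hz'
            exact ⟨jz, rfl, by omega⟩
        obtain ⟨ja, hja, hja2⟩ := getfm aa hva
        obtain ⟨jb, hjb, hjb2⟩ := getfm bb hvb
        obtain ⟨jc, hjc, hjc2⟩ := getfm cc hvc
        have keyeq : ∀ (x y : {v : Wt | 2 ≤ deg Q v}) (jx jy : Fin (t+1)),
            x.1 = Sum.inl jx → y.1 = Sum.inl jy → jx.1 = jy.1 → x = y := by
          intro x y jx jy hx hy h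
          apply Subtype.ext
          rw [hx, hy, finext jx jy h]
        rcases hja2 with h1 | h1 <;> rcases hjb2 with h2 | h2 <;> rcases hjc2 with h3 | h3 <;>
          first
            | exact Or.inl (keyeq aa bb _ _ hja hjb (by omega))
            | exact Or.inr (Or.inl (keyeq aa cc _ _ hja hjc (by omega)))
            | exact Or.inr (Or.inr (keyeq bb cc _ _ hjb hjc (by omega)))

  -- edge count
  set f : Fin t → Sym2 Wt := fun r => s(Sum.inl ⟨r.1, by omega⟩, Sum.inl ⟨r.1 + 1, by omega⟩)
    with hf
  set g : Fin m → Sym2 Wt := fun s => s(Sum.inl (attach s), Sum.inr s) with hg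
  have hedges : Q.edgeSet = Set.range f ∪ Set.range g := by
    ext e
    induction e with
    | h x y =>
      rw [SimpleGraph.mem_edgeSet]
      constructor
      · intro hadj
        match x, y with
        | Sum.inl i, Sum.inl j =>
          rcases (hQ1 i j).mp hadj with hc | hc
          · refine Or.inl ⟨⟨i.1, by omega⟩, ?_⟩
            rw [hf]
            rw [Sym2.eq_iff]
            left
            constructor
            · exact congrArg Sum.inl (finext _ _ rfl)
            · exact congrArg Sum.inl (finext _ _ (by show i.1 + 1 = j.1; omega))
          · refine Or.inl ⟨⟨j.1, by omega⟩, ?_⟩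
            rw [hf]
            rw [Sym2.eq_iff]
            right
            constructor
            · exact congrArg Sum.inl (finext _ _ rfl)
            · exact congrArg Sum.inl (finext _ _ (by show j.1 + 1 = i.1; omega))
        | Sum.inl i, Sum.inr s =>
          refine Or.inr ⟨s, ?_⟩
          rw [hg, Sym2.eq_iff]
          left
          exact ⟨congrArg Sum.inl (finext _ _ ((hQ2 i s).mp hadj)), rfl⟩
        | Sum.inr s, Sum.inl i =>
          refine Or.inr ⟨s, ?_⟩
          rw [hg, Sym2.eq_iff]
          right
          exact ⟨congrArg Sum.inl (finext _ _ ((hQ2 i s).mp hadj.symm)), rfl⟩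
        | Sum.inr s, Sum.inr s' => exact absurd hadj (hQ3 s s')
      · rintro (⟨r, hr⟩ | ⟨s', hs'⟩)
        · rw [hf] at hr
          rw [Sym2.eq_iff] at hr
          rcases hr with ⟨rfl, rfl⟩ | ⟨rfl, rfl⟩
          · exact (hQ1 _ _).mpr (Or.inl rfl)
          · exact (hQ1 _ _).mpr (Or.inr rfl)
        · rw [hg] at hs'
          rw [Sym2.eq_iff] at hs'
          rcases hs' with ⟨rfl, rfl⟩ | ⟨rfl, rfl⟩
          · exact (hQ2 _ _).mpr rfl
          · exact ((hQ2 _ _).mpr rfl).symm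
  have hfinj : Function.Injective f := by
    intro r r' h
    rw [hf, Sym2.eq_iff] at h
    rcases h with ⟨h1, h2⟩ | ⟨h1, h2⟩
    · have := congrArg Fin.val (Sum.inl_injective h1)
      exact finext _ _ (by exact this)
    · have e1 : r.1 = r'.1 + 1 := congrArg Fin.val (Sum.inl_injective h1)
      have e2 : r.1 + 1 = r'.1 := congrArg Fin.val (Sum.inl_injective h2)
      exact finext _ _ (by omega)
  have hginj : Function.Injective g := by
    intro s s' h
    rw [hg, Sym2.eq_iff] at h
    rcases h with ⟨h1, h2⟩ | ⟨h1, h2⟩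
    · exact Sum.inr_injective h2
    · exact absurd h1 Sum.inl_ne_inr
  have hdisj : Disjoint (Set.range f) (Set.range g) := by
    rw [Set.disjoint_left]
    rintro e ⟨r, rfl⟩ ⟨s', hs'⟩
    rw [hg, hf, Sym2.eq_iff] at hs'
    rcases hs' with ⟨h1, h2⟩ | ⟨h1, h2⟩
    · exact absurd h2 Sum.inr_ne_inl
    · exact absurd h2 Sum.inr_ne_inl
  have hcount : edgeCount Q = k := by
    show Q.edgeSet.ncard = k
    rw [hedges, Set.ncard_union_eq hdisj (Set.finite_range f) (Set.finite_range g)]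
    rw [← Set.image_univ, ← Set.image_univ,
      Set.ncard_image_of_injective _ hfinj, Set.ncard_image_of_injective _ hginj,
      Set.ncard_univ, Set.ncard_univ, Nat.card_eq_fintype_card, Nat.card_eq_fintype_card,
      Fintype.card_fin, Fintype.card_fin]
    omega
  exact ⟨Wt, inferInstance, c, hsurj, hfibers, ⟨hQtree, hpathgraph⟩, hcount⟩







end Aux


theorem aux_main
    {V : Type*} [Fintype V] (G : SimpleGraph V) (hG : G.IsTree) (hE : 1 ≤ edgeCount G)
    (k : ℕ) (hk1 : 1 ≤ k) (hk2 : k ≤ kappa G) :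
    ∃ (W : Type) (_ : Fintype W) (c : V → W),
      Function.Surjective c ∧
      (∀ w : W, (G.induce (c ⁻¹' {w})).Connected) ∧
      IsCaterpillar (quotientGraph G c) ∧
      edgeCount (quotientGraph G c) = k := by
  classical
  have hGc : G.Connected := hG.isConnected
  have hadj : ∃ x y : V, G.Adj x y := by
    have hne : G.edgeSet.Nonempty := by
      apply Set.nonempty_of_ncard_ne_zero
      have : 1 ≤ G.edgeSet.ncard := hE
      omega
    obtain ⟨e, he⟩ := hne
    revert he
    refine Sym2.ind ?_ e
    intro x y he
    exact ⟨x, y, he⟩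
  obtain ⟨x0, y0, hxy0⟩ := hadj
  set D : Set ℕ := {n | ∃ u v : V, G.dist u v = n} with hD
  have hbdd : BddAbove D := by
    refine ⟨Fintype.card V, ?_⟩
    rintro n ⟨u, v, rfl⟩
    obtain ⟨q, hq, hqlen⟩ := (hGc.preconnected u v).exists_path_of_dist
    rw [← hqlen]
    exact le_of_lt hq.length_lt
  have hDne : D.Nonempty := ⟨G.dist x0 y0, x0, y0, rfl⟩
  have hdmem : treeDiam G ∈ D := Nat.sSup_mem hDne hbdd
  have hd1 : 1 ≤ treeDiam G := by
    have h1 : (1 : ℕ) ∈ D := ⟨x0, y0, SimpleGraph.dist_eq_one_iff_adj.mpr hxy0⟩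
    exact le_csSup hbdd h1
  obtain ⟨a, b, hdist⟩ := hdmem
  set d : ℕ := treeDiam G with hd
  obtain ⟨p, hp, hplen⟩ := (hGc.preconnected a b).exists_path_of_dist
  have hplen' : p.length = d := by rw [hplen, hdist]
  -- leaves on the path are endpoints
  have hLP : ∀ v : V, deg G v = 1 → v ∈ p.support → v = a ∨ v = b := by
    intro v hv hvs
    obtain ⟨n, hn, hnle⟩ := SimpleGraph.Walk.mem_support_iff_exists_getVert.mp hvs
    by_cases h0 : n = 0
    · left; rw [← hn, h0]; exact p.getVert_zero
    · by_cases hL : n = p.length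
      · right; rw [← hn, hL]; exact p.getVert_length
      · exfalso
        have hadj1 : G.Adj (p.getVert n) (p.getVert (n-1)) := by
          have := p.adj_getVert_succ (i := n-1) (by omega)
          rw [show n - 1 + 1 = n by omega] at this
          exact this.symm
        have hadj2 : G.Adj (p.getVert n) (p.getVert (n+1)) :=
          p.adj_getVert_succ (by omega)
        have hneq : p.getVert (n-1) ≠ p.getVert (n+1) := by
          intro hcon
          have := Aux.IsPath.getVert_inj hp (n-1) (n+1) (by omega) (by omega) hcon
          omega
        have h2 : 1 < (G.neighborSet (p.getVert n)).ncard := by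
          rw [Set.one_lt_ncard (Set.toFinite _)]
          exact ⟨_, hadj1, _, hadj2, hneq⟩
        rw [hn] at h2
        have : deg G v = (G.neighborSet v).ncard := rfl
        omega
  -- count off-path leaves
  set Loff : Set V := {v | deg G v = 1} \ {v | v ∈ p.support} with hLoff
  have hcard : leafCount G ≤ Loff.ncard + 2 := by
    have hsub : {v : V | deg G v = 1} ⊆ Loff ∪ {a, b} := by
      intro v hv
      by_cases hvs : v ∈ p.support
      · right
        rcases hLP v hv hvs with rfl | rfl
        · exact Set.mem_insert _ _
        · exact Set.mem_insert_of_mem _ rfl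
      · exact Or.inl ⟨hv, hvs⟩
    calc leafCount G ≤ (Loff ∪ {a, b}).ncard :=
          Set.ncard_le_ncard hsub (Set.toFinite _)
      _ ≤ Loff.ncard + ({a, b} : Set V).ncard := Set.ncard_union_le _ _
      _ ≤ Loff.ncard + 2 := by
          have h1 : ({a, b} : Set V).ncard ≤ 2 := by
            have := Set.ncard_insert_le a ({b} : Set V)
            rw [Set.ncard_singleton] at this
            omega
          omega
  set t : ℕ := min k d with ht
  set m : ℕ := k - t with hm
  have hk2' : k ≤ leafCount G + treeDiam G - 2 := hk2
  have hmle : m ≤ Loff.ncard := by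
    by_cases hkd : k ≤ d
    · have : m = 0 := by omega
      omega
    · have htd' : t = d := by omega
      have : m = k - d := by omega
      omega
  -- choose the off-path leaves
  have hLofffin : Loff.Finite := Set.toFinite _
  obtain ⟨S, hSsub, hScard⟩ := Finset.exists_subset_card_eq (s := hLofffin.toFinset) (n := m)
    (by rw [Set.ncard_eq_toFinset_card Loff hLofffin] at hmle; exact hmle)
  have hSmem : ∀ x ∈ S, x ∈ Loff := by
    intro x hx
    have := hSsub hx
    rwa [Set.Finite.mem_toFinset] at this
  refine Aux.construction G hG a b p hp d hplen' k t m (by omega) (by omega) (by omega) S hScard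
    ?_ ?_
  · intro x hx
    exact (hSmem x hx).1
  · intro x hx
    exact (hSmem x hx).2

/-- For every finite tree `T` with at least one edge and every `k` with
`1 ≤ k ≤ κ(T)`, a caterpillar with exactly `k` edges can be obtained from `T` by contracting
edges. -/
theorem contract_tree_to_caterpillar_of_le_kappa
    {V : Type*} [Fintype V] (G : SimpleGraph V) (hG : G.IsTree) (hE : 1 ≤ edgeCount G)
    (k : ℕ) (hk1 : 1 ≤ k) (hk2 : k ≤ kappa G) :
    ∃ (W : Type) (_ : Fintype W) (c : V → W),
      Function.Surjective c ∧
      (∀ w : W, (G.induce (c ⁻¹' {w})).Connected) ∧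
      IsCaterpillar (quotientGraph G c) ∧
      edgeCount (quotientGraph G c) = k := by
  exact aux_main G hG hE k hk1 hk2
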